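/- In a delicate MDP modeled as a SCIM with robust states S_t, delicate states Z_t, actions A_t, and rewards R_t for 0 ≤ t ≤ T (with each variable depending only on variables of the previous timestep, and R_t depending on S_t, Z_t, A_{t−1}), let G' be the edge-subgraph removing the arrows A_{t'} → Z_{t'+1} and S_{t'} → Z_{t'+1} for all t' ≥ 0. Then G' admits no directed path from A_0 to any Z_{t'} with t' ≥ 1, and hence no instrumental control incentive on any delicate state variable. -/

import Mathlib

open Relation

/-- Nodes of the delicate `T`-step MDP CID. -/
inductive DNode : Type
  | S : ℕ → DNode
  | Z : ℕ → DNode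
  | A : ℕ → DNode
  | R : ℕ → DNode
  deriving DecidableEq

/-- Edges of the delicate `T`-step MDP CID: `S_t, Z_t, A_t → S_{t+1}`;
`S_t, Z_t, A_t → Z_{t+1}`; `S_t, Z_t → R_t` and `A_t → R_{t+1}` (rewards `R_1 … R_T`);
and information links `S_t, Z_t, R_t → A_t` (decisions `A_0 … A_{T-1}`). -/
def dEdge (T : ℕ) (v w : DNode) : Prop :=
  match v, w with
  | .S t, .S u => u = t + 1 ∧ u ≤ T
  | .Z t, .S u => u = t + 1 ∧ u ≤ T
  | .A t, .S u => u = t + 1 ∧ u ≤ T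
  | .S t, .Z u => u = t + 1 ∧ u ≤ T
  | .Z t, .Z u => u = t + 1 ∧ u ≤ T
  | .A t, .Z u => u = t + 1 ∧ u ≤ T
  | .S t, .R u => u = t ∧ 1 ≤ t ∧ t ≤ T
  | .Z t, .R u => u = t ∧ 1 ≤ t ∧ t ≤ T
  | .A t, .R u => u = t + 1 ∧ u ≤ T
  | .S t, .A u => u = t ∧ t + 1 ≤ T
  | .Z t, .A u => u = t ∧ t + 1 ≤ T
  | .R t, .A u => u = t ∧ t + 1 ≤ T
  | _, _ => False

/-- The edge-subgraph `G'` removing the arrows `A_{t'} → Z_{t'+1}` and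
`S_{t'} → Z_{t'+1}` for all `t'`. -/
def dEdge' (T : ℕ) (v w : DNode) : Prop :=
  dEdge T v w ∧
    (match v, w with
      | .A _, .Z _ => False
      | .S _, .Z _ => False
      | _, _ => True)

/-- In the delicate MDP CID, the subgraph `G'` removing the arrows
`A_{t'} → Z_{t'+1}` and `S_{t'} → Z_{t'+1}` admits no directed path from `A_0` to any
`Z_{t'}` with `t' ≥ 1`, and hence (by the graphical ICI criterion) no directed path
`A_0 → Z_{t'} → R_s`, i.e. no instrumental control incentive on any delicate state. -/
lemma pred_of_Z {T : ℕ} {v : DNode} {t : ℕ} (h : dEdge' T v (DNode.Z t)) :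
    ∃ k, v = DNode.Z k := by
  obtain ⟨h1, h2⟩ := h
  cases v <;> simp_all [dEdge]

lemma trans_to_Z {T : ℕ} {v : DNode} {t : ℕ}
    (h : TransGen (dEdge' T) v (DNode.Z t)) : ∃ k, v = DNode.Z k := by
  induction h using TransGen.head_induction_on with
  | single h => exact pred_of_Z h
  | head h _ ih =>
    obtain ⟨k, rfl⟩ := ih
    exact pred_of_Z h

theorem stmt4 (T : ℕ) : ∀ t' : ℕ, 1 ≤ t' →
    (¬ TransGen (dEdge' T) (DNode.A 0) (DNode.Z t')) ∧
    (∀ s : ℕ, ¬ (TransGen (dEdge' T) (DNode.A 0) (DNode.Z t') ∧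
        TransGen (dEdge' T) (DNode.Z t') (DNode.R s))) := by
  intro t' _
  have hA : ¬ TransGen (dEdge' T) (DNode.A 0) (DNode.Z t') := by
    intro h
    obtain ⟨k, hk⟩ := trans_to_Z h
    exact DNode.noConfusion hk
  exact ⟨hA, fun s hs => hA hs.1⟩
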